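/- Fix θ > 0 and let P_θ f(x) = ∫_ℝ f(z) dN(e^{−θ}x, 1−e^{−2θ})(z). Then for every α > 1 the shift Harnack inequality (P_θ f(x))^α ≤ P_θ( f^α(v+·) )(x) · exp( α v² / (2(α−1)(1−e^{−2θ})) ) holds for all x, v ∈ ℝ and all bounded Borel measurable f : ℝ → [0,∞), where f^α(v+·) denotes the function z ↦ f(v+z)^α. -/

import Mathlib

open MeasureTheory ProbabilityTheory Real
open scoped ENNReal NNReal

lemma gpdf_shift' {m s : ℝ} (hs : 0 < s) (v z : ℝ) :
    gaussianPDFReal m s.toNNReal (v + z)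
      = rexp (-(2*v*(z-m)+v^2)/(2*s)) * gaussianPDFReal m s.toNNReal z := by
  have hsc : (s.toNNReal : ℝ) = s := Real.coe_toNNReal _ hs.le
  simp only [gaussianPDFReal, hsc]
  rw [mul_left_comm, ← Real.exp_add]
  congr 2
  field_simp
  ring

lemma gpdf_tilt' {m s : ℝ} (hs : 0 < s) (t z : ℝ) :
    rexp (t*(z-m)) * gaussianPDFReal m s.toNNReal z
      = rexp (t^2*s/2) * gaussianPDFReal (m + t*s) s.toNNReal z := by
  have hsc : (s.toNNReal : ℝ) = s := Real.coe_toNNReal _ hs.le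
  simp only [gaussianPDFReal, hsc]
  rw [mul_left_comm, ← Real.exp_add, mul_left_comm, ← Real.exp_add]
  congr 2
  field_simp
  ring

lemma var_ne_zero {s : ℝ} (hs : 0 < s) : s.toNNReal ≠ 0 := by
  simp [Real.toNNReal_eq_zero, not_le, hs]

lemma lintegral_gauss_shift {m s : ℝ} (hs : 0 < s) {g : ℝ → ℝ≥0∞} (hg : Measurable g)
    (v : ℝ) :
    ∫⁻ z, g z ∂(gaussianReal m s.toNNReal)
      = ∫⁻ z, g (v + z) * ENNReal.ofReal (rexp (-(2*v*(z-m)+v^2)/(2*s)))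
          ∂(gaussianReal m s.toNNReal) := by
  have hV := var_ne_zero hs
  have hgm : Measurable fun z => g (v + z) * ENNReal.ofReal (rexp (-(2*v*(z-m)+v^2)/(2*s))) := by
    exact (hg.comp (measurable_id.const_add v)).mul (by fun_prop)
  rw [gaussianReal_of_var_ne_zero _ hV,
    lintegral_withDensity_eq_lintegral_mul _ (measurable_gaussianPDF _ _) hg,
    lintegral_withDensity_eq_lintegral_mul _ (measurable_gaussianPDF _ _) hgm]
  calc ∫⁻ z, (gaussianPDF m s.toNNReal * g) z ∂volume
      = ∫⁻ z, (gaussianPDF m s.toNNReal * g) (v + z) ∂volume :=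
        ((measurePreserving_add_left volume v).lintegral_comp
          ((measurable_gaussianPDF _ _).mul hg)).symm
    _ = ∫⁻ z, (gaussianPDF m s.toNNReal * fun z => g (v + z) *
          ENNReal.ofReal (rexp (-(2*v*(z-m)+v^2)/(2*s)))) z ∂volume := by
        refine lintegral_congr fun z => ?_
        simp only [Pi.mul_apply, gaussianPDF]
        rw [gpdf_shift' hs, ENNReal.ofReal_mul (Real.exp_nonneg _)]
        ring

lemma lintegral_gauss_exp {s : ℝ} (hs : 0 < s) (m t : ℝ) :
    ∫⁻ z, ENNReal.ofReal (rexp (t*(z-m))) ∂(gaussianReal m s.toNNReal)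
      = ENNReal.ofReal (rexp (t^2*s/2)) := by
  have hV := var_ne_zero hs
  have hgm : Measurable fun z => ENNReal.ofReal (rexp (t*(z-m))) := by fun_prop
  rw [gaussianReal_of_var_ne_zero _ hV,
    lintegral_withDensity_eq_lintegral_mul _ (measurable_gaussianPDF _ _) hgm]
  have : ∀ z, (gaussianPDF m s.toNNReal * fun z => ENNReal.ofReal (rexp (t*(z-m)))) z
      = ENNReal.ofReal (rexp (t^2*s/2)) * gaussianPDF (m + t*s) s.toNNReal z := by
    intro z
    simp only [Pi.mul_apply, gaussianPDF]
    rw [mul_comm, ← ENNReal.ofReal_mul (Real.exp_nonneg _), gpdf_tilt' hs,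
      ENNReal.ofReal_mul (Real.exp_nonneg _)]
  rw [lintegral_congr this, lintegral_const_mul _ (measurable_gaussianPDF _ _),
    lintegral_gaussianPDF_eq_one _ hV, mul_one]

theorem stmt_11 (θ : ℝ) (hθ : 0 < θ) (α : ℝ) (hα : 1 < α)
    (f : ℝ → ℝ) (hf : Measurable f) (hf0 : ∀ z, 0 ≤ f z) (hfbd : ∃ M, ∀ z, f z ≤ M)
    (x v : ℝ) :
    (∫ z, f z ∂(gaussianReal (Real.exp (-θ) * x) (Real.toNNReal (1 - Real.exp (-2*θ))))) ^ α ≤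
      (∫ z, f (v + z) ^ α
          ∂(gaussianReal (Real.exp (-θ) * x) (Real.toNNReal (1 - Real.exp (-2*θ))))) *
        Real.exp (α * v^2 / (2*(α-1)*(1 - Real.exp (-2*θ)))) := by
  obtain ⟨M, hM⟩ := hfbd
  set s : ℝ := 1 - Real.exp (-2*θ) with hs_def
  have hs : 0 < s := by
    have : Real.exp (-2*θ) < 1 := Real.exp_lt_one_iff.mpr (by linarith)
    simp only [hs_def]; linarith
  set m : ℝ := Real.exp (-θ) * x with hm_def
  set μ := gaussianReal m s.toNNReal with hμ_def
  have hα0 : (0:ℝ) < α := by linarith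
  have hα1 : α - 1 ≠ 0 := by linarith
  set β : ℝ := α / (α - 1) with hβ_def
  have hβ0 : (0:ℝ) < β := div_pos hα0 (by linarith)
  have hpq : Real.HolderConjugate α β := (Real.holderConjugate_iff_eq_conjExponent hα).mpr rfl
  -- measurable shifted functions
  have hfv : Measurable fun z => f (v + z) := hf.comp (measurable_id.const_add v)
  have hfvα : Measurable fun z => f (v + z) ^ α := (Real.continuous_rpow_const hα0.le).measurable.comp hfv
  -- lintegral versions
  set Iℒ : ℝ≥0∞ := ∫⁻ z, ENNReal.ofReal (f z) ∂μ with hIℒ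
  set Jℒ : ℝ≥0∞ := ∫⁻ z, ENNReal.ofReal (f (v + z) ^ α) ∂μ with hJℒ
  set R : ℝ → ℝ≥0∞ := fun z => ENNReal.ofReal (rexp (-(2*v*(z-m)+v^2)/(2*s))) with hR
  have hRmeas : Measurable R := by rw [hR]; fun_prop
  -- Step 1: shift identity
  have hshift : Iℒ = ∫⁻ z, ENNReal.ofReal (f (v + z)) * R z ∂μ :=
    lintegral_gauss_shift hs hf.ennreal_ofReal v
  -- Step 2: Hölder
  have hholder : Iℒ ≤ (∫⁻ z, ENNReal.ofReal (f (v + z)) ^ α ∂μ) ^ (1/α)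
      * (∫⁻ z, R z ^ β ∂μ) ^ (1/β) := by
    rw [hshift]
    exact ENNReal.lintegral_mul_le_Lp_mul_Lq μ hpq
      (hfv.ennreal_ofReal.aemeasurable) hRmeas.aemeasurable
  have hJeq : (∫⁻ z, ENNReal.ofReal (f (v + z)) ^ α ∂μ) = Jℒ := by
    refine lintegral_congr fun z => ?_
    rw [ENNReal.ofReal_rpow_of_nonneg (hf0 _) hα0.le]
  -- Step 3: compute the lintegral of R ^ β
  set t : ℝ := -(β * v) / s with ht_def
  have hEeq : (∫⁻ z, R z ^ β ∂μ) = ENNReal.ofReal (rexp (β*(β-1)*v^2/(2*s))) := by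
    have h1 : ∀ z, R z ^ β
        = ENNReal.ofReal (rexp (t*(z-m))) * ENNReal.ofReal (rexp (-(β*v^2)/(2*s))) := by
      intro z
      rw [hR, ENNReal.ofReal_rpow_of_pos (Real.exp_pos _), ← Real.exp_mul,
        ← ENNReal.ofReal_mul (Real.exp_nonneg _), ← Real.exp_add]
      congr 2
      simp only [ht_def, hβ_def]
      field_simp
      ring
    simp_rw [h1]
    rw [lintegral_mul_const _ (by fun_prop : Measurable fun z => ENNReal.ofReal (rexp (t*(z-m)))),
      lintegral_gauss_exp hs m t, ← ENNReal.ofReal_mul (Real.exp_nonneg _), ← Real.exp_add]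
    congr 2
    simp only [ht_def, hβ_def]
    field_simp
    ring
  -- Step 4: raise to the power α
  have hmain : Iℒ ^ α ≤ Jℒ * ENNReal.ofReal (rexp (α * v^2 / (2*(α-1)*s))) := by
    have h2 : Iℒ ^ α ≤ ((∫⁻ z, ENNReal.ofReal (f (v + z)) ^ α ∂μ) ^ (1/α)
        * (∫⁻ z, R z ^ β ∂μ) ^ (1/β)) ^ α :=
      ENNReal.rpow_le_rpow hholder hα0.le
    rw [hJeq, hEeq, ENNReal.mul_rpow_of_nonneg _ _ hα0.le, ← ENNReal.rpow_mul,
      ← ENNReal.rpow_mul, one_div_mul_cancel hα0.ne', ENNReal.rpow_one,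
      ENNReal.ofReal_rpow_of_pos (Real.exp_pos _), ← Real.exp_mul] at h2
    refine h2.trans_eq ?_
    congr 2
    simp only [hβ_def]
    field_simp
    ring
  -- Step 5: back to Bochner integrals
  have hInn : 0 ≤ᵐ[μ] f := ae_of_all _ hf0
  have hI : ∫ z, f z ∂μ = Iℒ.toReal :=
    integral_eq_lintegral_of_nonneg_ae hInn hf.aestronglyMeasurable
  have hJ : ∫ z, f (v + z) ^ α ∂μ = Jℒ.toReal :=
    integral_eq_lintegral_of_nonneg_ae (ae_of_all _ fun z => Real.rpow_nonneg (hf0 _) _)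
      hfvα.aestronglyMeasurable
  have hJtop : Jℒ ≠ ⊤ := by
    have hle : Jℒ ≤ ∫⁻ _, ENNReal.ofReal (M ^ α) ∂μ := by
      refine lintegral_mono fun z => ENNReal.ofReal_le_ofReal ?_
      exact Real.rpow_le_rpow (hf0 _) (hM _) hα0.le
    rw [lintegral_const, measure_univ, mul_one] at hle
    exact (hle.trans_lt ENNReal.ofReal_lt_top).ne
  have hRHS : (Jℒ * ENNReal.ofReal (rexp (α * v^2 / (2*(α-1)*s)))) ≠ ⊤ :=
    ENNReal.mul_ne_top hJtop ENNReal.ofReal_ne_top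
  rw [hI, hJ]
  calc Iℒ.toReal ^ α = (Iℒ ^ α).toReal := ENNReal.toReal_rpow _ _
    _ ≤ (Jℒ * ENNReal.ofReal (rexp (α * v^2 / (2*(α-1)*s)))).toReal :=
        ENNReal.toReal_mono hRHS hmain
    _ = Jℒ.toReal * rexp (α * v^2 / (2*(α-1)*s)) := by
        rw [ENNReal.toReal_mul, ENNReal.toReal_ofReal (Real.exp_nonneg _)]
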